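/- Let 0 < a < b and let f : [a,b] → ℝ be continuous on [a,b] and differentiable on (a,b). Let a = x₀ < x₁ < ⋯ < xₙ = b be a partition of [a,b], let ξᵢ ∈ [xᵢ, xᵢ₊₁] for i = 0, …, n−1 be intermediate points, set hᵢ := xᵢ₊₁ − xᵢ, and define the quadrature Sₙ := Σ_{i=0}^{n−1} (f(ξᵢ)/ξᵢ)·((xᵢ + xᵢ₊₁)/2)·hᵢ. Then the remainder Rₙ := ∫ₐᵇ f(t) dt − Sₙ satisfies |Rₙ| ≤ ‖f − ℓf′‖∞ · Σ_{i=0}^{n−1} (hᵢ²/ξᵢ)·[1/4 + ((ξᵢ − (xᵢ + xᵢ₊₁)/2)/hᵢ)²] ≤ (1/2)·‖f − ℓf′‖∞ · Σ_{i=0}^{n−1} hᵢ²/ξᵢ ≤ (‖f − ℓf′‖∞/(2a))·Σ_{i=0}^{n−1} hᵢ². -/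

import Mathlib

open Set intervalIntegral

open Set

lemma pompeiu_key (a b : ℝ) (f : ℝ → ℝ)
    (ha : 0 < a)
    (hf : ContinuousOn f (Set.Icc a b))
    (hd : DifferentiableOn ℝ f (Set.Ioo a b))
    (hbdd : BddAbove ((fun ξ => |f ξ - ξ * deriv f ξ|) '' Set.Ioo a b))
    (s t : ℝ) (hs : s ∈ Set.Icc a b) (ht : t ∈ Set.Icc a b) (hst : s < t) :
    |t * f s - s * f t| ≤
      sSup ((fun ξ => |f ξ - ξ * deriv f ξ|) '' Set.Ioo a b) * (t - s) := by
  set M := sSup ((fun ξ => |f ξ - ξ * deriv f ξ|) '' Set.Ioo a b) with hM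
  have hs0 : 0 < s := lt_of_lt_of_le ha hs.1
  have ht0 : 0 < t := lt_of_lt_of_le ha ht.1
  set F : ℝ → ℝ := fun u => u * f u⁻¹ with hF
  have hinv : t⁻¹ < s⁻¹ := by exact inv_strictAnti₀ hs0 hst
  -- points in Icc t⁻¹ s⁻¹ are positive and inverses land in Icc s t
  have hpos : ∀ u ∈ Set.Icc t⁻¹ s⁻¹, 0 < u := fun u hu => lt_of_lt_of_le (inv_pos.mpr ht0) hu.1
  have hmem : ∀ u ∈ Set.Icc t⁻¹ s⁻¹, u⁻¹ ∈ Set.Icc s t := by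
    intro u hu
    have hu0 := hpos u hu
    constructor
    · rw [le_inv_comm₀ hs0 hu0]
      exact hu.2
    · rw [inv_le_comm₀ hu0 ht0]
      exact hu.1
  have hsub : Set.Icc s t ⊆ Set.Icc a b := Set.Icc_subset_Icc hs.1 ht.2
  have hFc : ContinuousOn F (Set.Icc t⁻¹ s⁻¹) := by
    apply (continuousOn_id).mul
    apply hf.comp
    · intro u hu
      exact (continuousAt_inv₀ (hpos u hu).ne').continuousWithinAt
    · intro u hu
      exact hsub (hmem u hu)
  have hFd : ∀ c ∈ Set.Ioo t⁻¹ s⁻¹, HasDerivAt F (f c⁻¹ - c⁻¹ * deriv f c⁻¹) c := by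
    intro c hc
    have hc0 : 0 < c := hpos c (Set.Ioo_subset_Icc_self hc)
    have hcinv : c⁻¹ ∈ Set.Ioo a b := by
      have h1 : c⁻¹ ∈ Set.Ioo s t := by
        constructor
        · rw [lt_inv_comm₀ hs0 hc0]; exact hc.2
        · rw [inv_lt_comm₀ hc0 ht0]; exact hc.1
      exact Set.Ioo_subset_Ioo hs.1 ht.2 h1
    have hdf : HasDerivAt f (deriv f c⁻¹) c⁻¹ :=
      ((hd c⁻¹ hcinv).differentiableAt (Ioo_mem_nhds hcinv.1 hcinv.2)).hasDerivAt
    have h1 : HasDerivAt (fun u : ℝ => f u⁻¹) (deriv f c⁻¹ * (-(c ^ 2)⁻¹)) c :=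
      hdf.comp c (hasDerivAt_inv hc0.ne')
    have h2 : HasDerivAt F (1 * f c⁻¹ + c * (deriv f c⁻¹ * (-(c ^ 2)⁻¹))) c :=
      (hasDerivAt_id c).mul h1
    convert h2 using 1
    field_simp
    ring
  obtain ⟨c, hc, hceq⟩ := exists_deriv_eq_slope F hinv hFc
    (fun c hc => ((hFd c hc).differentiableAt).differentiableWithinAt)
  have hc0 : 0 < c := hpos c (Set.Ioo_subset_Icc_self hc)
  have hcinv : c⁻¹ ∈ Set.Ioo a b := by
    have h1 : c⁻¹ ∈ Set.Ioo s t := by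
      constructor
      · rw [lt_inv_comm₀ hs0 hc0]; exact hc.2
      · rw [inv_lt_comm₀ hc0 ht0]; exact hc.1
    exact Set.Ioo_subset_Ioo hs.1 ht.2 h1
  have hder : deriv F c = f c⁻¹ - c⁻¹ * deriv f c⁻¹ := (hFd c hc).deriv
  have hbound : |f c⁻¹ - c⁻¹ * deriv f c⁻¹| ≤ M :=
    le_csSup hbdd ⟨c⁻¹, hcinv, rfl⟩
  set D := f c⁻¹ - c⁻¹ * deriv f c⁻¹ with hD
  have hs0' : s ≠ 0 := hs0.ne'
  have ht0' : t ≠ 0 := ht0.ne'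
  have h : D * (s⁻¹ - t⁻¹) = s⁻¹ * f s - t⁻¹ * f t := by
    have hne : s⁻¹ - t⁻¹ ≠ 0 := sub_ne_zero.mpr hinv.ne'
    rw [hder] at hceq
    rw [hceq, div_mul_cancel₀ _ hne]
    simp only [hF, inv_inv]
  have e1 : (s⁻¹ - t⁻¹) * (s * t) = t - s := by field_simp
  have e2 : (s⁻¹ * f s - t⁻¹ * f t) * (s * t) = t * f s - s * f t := by
    field_simp
  have key : t * f s - s * f t = D * (t - s) := by
    field_simp at h
    linear_combination -h
  rw [key, abs_mul, abs_of_pos (by linarith : (0:ℝ) < t - s)]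
  exact mul_le_mul_of_nonneg_right hbound (by linarith)

lemma pompeiu_key' (a b : ℝ) (f : ℝ → ℝ)
    (ha : 0 < a) (hab : a < b)
    (hf : ContinuousOn f (Set.Icc a b))
    (hd : DifferentiableOn ℝ f (Set.Ioo a b))
    (hbdd : BddAbove ((fun ξ => |f ξ - ξ * deriv f ξ|) '' Set.Ioo a b))
    (s t : ℝ) (hs : s ∈ Set.Icc a b) (ht : t ∈ Set.Icc a b) :
    |t * f s - s * f t| ≤
      sSup ((fun ξ => |f ξ - ξ * deriv f ξ|) '' Set.Ioo a b) * |t - s| := by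
  rcases lt_trichotomy s t with h | h | h
  · rw [abs_of_pos (by linarith : (0:ℝ) < t - s)]
    exact pompeiu_key a b f ha hf hd hbdd s t hs ht h
  · subst h; simp
  · rw [abs_of_neg (by linarith : t - s < 0)]
    have := pompeiu_key a b f ha hf hd hbdd t s ht hs h
    calc |t * f s - s * f t| = |s * f t - t * f s| := by rw [abs_sub_comm]
    _ ≤ _ := by convert this using 2; ring

lemma Mnonneg (a b : ℝ) (f : ℝ → ℝ) (hab : a < b)
    (hbdd : BddAbove ((fun ξ => |f ξ - ξ * deriv f ξ|) '' Set.Ioo a b)) :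
    0 ≤ sSup ((fun ξ => |f ξ - ξ * deriv f ξ|) '' Set.Ioo a b) := by
  have hz : (a + b) / 2 ∈ Set.Ioo a b := ⟨by linarith, by linarith⟩
  exact le_trans (abs_nonneg _) (le_csSup hbdd ⟨(a + b) / 2, hz, rfl⟩)

lemma interval_est (a b : ℝ) (f : ℝ → ℝ)
    (ha : 0 < a) (hab : a < b)
    (hf : ContinuousOn f (Set.Icc a b))
    (hd : DifferentiableOn ℝ f (Set.Ioo a b))
    (hbdd : BddAbove ((fun ξ => |f ξ - ξ * deriv f ξ|) '' Set.Ioo a b))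
    (p q c : ℝ) (hpq : p < q) (hp : a ≤ p) (hq : q ≤ b) (hc : c ∈ Set.Icc p q) :
    |(∫ t in p..q, f t) - f c / c * ((p + q) / 2) * (q - p)| ≤
      sSup ((fun ξ => |f ξ - ξ * deriv f ξ|) '' Set.Ioo a b) *
        ((q - p) ^ 2 / c * (1 / 4 + ((c - (p + q) / 2) / (q - p)) ^ 2)) := by
  set M := sSup ((fun ξ => |f ξ - ξ * deriv f ξ|) '' Set.Ioo a b) with hM
  have hM0 : 0 ≤ M := Mnonneg a b f hab hbdd
  have hc0 : 0 < c := lt_of_lt_of_le ha (le_trans hp hc.1)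
  have hsub : Set.Icc p q ⊆ Set.Icc a b := Set.Icc_subset_Icc hp hq
  have hfi : IntervalIntegrable f MeasureTheory.volume p q := by
    apply ContinuousOn.intervalIntegrable
    rw [Set.uIcc_of_le hpq.le]
    exact hf.mono hsub
  -- the error function
  set g : ℝ → ℝ := fun t => f t - f c / c * t with hg
  have hmulint : IntervalIntegrable (fun t : ℝ => f c / c * t) MeasureTheory.volume p q :=
    (continuous_const.mul continuous_id').intervalIntegrable p q
  have hgi : IntervalIntegrable g MeasureTheory.volume p q := hfi.sub hmulint
  have hint : (∫ t in p..q, g t) =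
      (∫ t in p..q, f t) - f c / c * ((p + q) / 2) * (q - p) := by
    have : (∫ t in p..q, g t) = (∫ t in p..q, f t) - ∫ t in p..q, f c / c * t :=
      intervalIntegral.integral_sub hfi hmulint
    rw [this]
    congr 1
    rw [intervalIntegral.integral_const_mul]
    have h2 : (∫ t in p..q, t) = (q ^ 2 - p ^ 2) / 2 := integral_id
    rw [h2]; ring
  -- pointwise bound
  have hpt : ∀ t ∈ Set.Icc p q, |g t| ≤ M / c * |t - c| := by
    intro t ht
    have htab : t ∈ Set.Icc a b := hsub ht
    have hcab : c ∈ Set.Icc a b := hsub hc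
    have key := pompeiu_key' a b f ha hab hf hd hbdd t c htab hcab
    have hgt : g t = (c * f t - t * f c) / c := by
      rw [hg]; field_simp
    rw [hgt, abs_div, abs_of_pos hc0, div_le_iff₀ hc0]
    calc |c * f t - t * f c| ≤ M * |c - t| := key
    _ = M / c * |t - c| * c := by rw [abs_sub_comm]; field_simp
  -- integral of |t - c|
  have habs : (∫ t in p..q, |t - c|) = ((c - p) ^ 2 + (q - c) ^ 2) / 2 := by
    have hsplit : (∫ t in p..c, |t - c|) + (∫ t in c..q, |t - c|) =
        ∫ t in p..q, |t - c| := by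
      apply intervalIntegral.integral_add_adjacent_intervals <;>
      · apply ContinuousOn.intervalIntegrable
        exact (continuous_id.sub continuous_const).abs.continuousOn
    have e1 : (∫ t in p..c, |t - c|) = (c - p) ^ 2 / 2 := by
      have : (∫ t in p..c, |t - c|) = ∫ t in p..c, (c - t) := by
        apply intervalIntegral.integral_congr
        intro t ht
        rw [Set.uIcc_of_le hc.1] at ht
        show |t - c| = c - t
        rw [abs_of_nonpos (by linarith [ht.2])]; ring
      rw [this, intervalIntegral.integral_sub (intervalIntegrable_const)
        (intervalIntegral.intervalIntegrable_id), integral_id, integral_const]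
      rw [smul_eq_mul]; ring
    have e2 : (∫ t in c..q, |t - c|) = (q - c) ^ 2 / 2 := by
      have : (∫ t in c..q, |t - c|) = ∫ t in c..q, (t - c) := by
        apply intervalIntegral.integral_congr
        intro t ht
        rw [Set.uIcc_of_le hc.2] at ht
        show |t - c| = t - c
        rw [abs_of_nonneg (by linarith [ht.1])]
      rw [this, intervalIntegral.integral_sub (intervalIntegral.intervalIntegrable_id)
        (intervalIntegrable_const), integral_id, integral_const]
      rw [smul_eq_mul]; ring
    rw [← hsplit, e1, e2]; ring
  have hbig : |(∫ t in p..q, g t)| ≤ M / c * (((c - p) ^ 2 + (q - c) ^ 2) / 2) := by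
    calc |(∫ t in p..q, g t)| ≤ ∫ t in p..q, |g t| :=
          intervalIntegral.abs_integral_le_integral_abs hpq.le
    _ ≤ ∫ t in p..q, M / c * |t - c| := by
          apply intervalIntegral.integral_mono_on hpq.le hgi.abs
          · exact (continuous_const.mul (continuous_id.sub continuous_const).abs).intervalIntegrable p q
          · exact hpt
    _ = M / c * ∫ t in p..q, |t - c| := intervalIntegral.integral_const_mul _ _
    _ = M / c * (((c - p) ^ 2 + (q - c) ^ 2) / 2) := by rw [habs]
  rw [← hint]
  calc |(∫ t in p..q, g t)| ≤ M / c * (((c - p) ^ 2 + (q - c) ^ 2) / 2) := hbig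
  _ = M * ((q - p) ^ 2 / c * (1 / 4 + ((c - (p + q) / 2) / (q - p)) ^ 2)) := by
      have hqp : q - p ≠ 0 := sub_ne_zero.mpr hpq.ne'
      rw [div_pow]
      field_simp
      ring



/-- Theorem 5.1: error estimate for the quadrature rule built on Pompeiu's inequality. -/
theorem pompeiu_quadrature (a b : ℝ) (f : ℝ → ℝ)
    (ha : 0 < a) (hab : a < b)
    (hf : ContinuousOn f (Set.Icc a b))
    (hd : DifferentiableOn ℝ f (Set.Ioo a b))
    (hbdd : BddAbove ((fun ξ => |f ξ - ξ * deriv f ξ|) '' Set.Ioo a b))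
    (n : ℕ) (x ξ : ℕ → ℝ)
    (hx0 : x 0 = a) (hxn : x n = b)
    (hmono : ∀ i < n, x i < x (i + 1))
    (hξ : ∀ i < n, ξ i ∈ Set.Icc (x i) (x (i + 1))) :
    |(∫ t in a..b, f t) -
        ∑ i ∈ Finset.range n,
          f (ξ i) / ξ i * ((x i + x (i + 1)) / 2) * (x (i + 1) - x i)| ≤
      sSup ((fun ξ => |f ξ - ξ * deriv f ξ|) '' Set.Ioo a b) *
        ∑ i ∈ Finset.range n,
          (x (i + 1) - x i) ^ 2 / ξ i *
            (1 / 4 + ((ξ i - (x i + x (i + 1)) / 2) / (x (i + 1) - x i)) ^ 2) ∧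
    sSup ((fun ξ => |f ξ - ξ * deriv f ξ|) '' Set.Ioo a b) *
        ∑ i ∈ Finset.range n,
          (x (i + 1) - x i) ^ 2 / ξ i *
            (1 / 4 + ((ξ i - (x i + x (i + 1)) / 2) / (x (i + 1) - x i)) ^ 2) ≤
      1 / 2 * sSup ((fun ξ => |f ξ - ξ * deriv f ξ|) '' Set.Ioo a b) *
        ∑ i ∈ Finset.range n, (x (i + 1) - x i) ^ 2 / ξ i ∧
    1 / 2 * sSup ((fun ξ => |f ξ - ξ * deriv f ξ|) '' Set.Ioo a b) *
        ∑ i ∈ Finset.range n, (x (i + 1) - x i) ^ 2 / ξ i ≤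
      sSup ((fun ξ => |f ξ - ξ * deriv f ξ|) '' Set.Ioo a b) / (2 * a) *
        ∑ i ∈ Finset.range n, (x (i + 1) - x i) ^ 2 := by
  set M := sSup ((fun ξ => |f ξ - ξ * deriv f ξ|) '' Set.Ioo a b) with hM
  have hM0 : 0 ≤ M := Mnonneg a b f hab hbdd
  -- monotonicity of the partition
  have hmono' : ∀ j ≤ n, ∀ i ≤ j, x i ≤ x j := by
    intro j hj
    induction j with
    | zero =>
      intro i hi
      have : i = 0 := Nat.le_zero.mp hi
      subst this; exact le_rfl
    | succ j ih =>
      intro i hi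
      by_cases h : i ≤ j
      · exact le_trans (ih (by omega) i h) (hmono j (by omega)).le
      · have : i = j + 1 := by omega
        subst this; exact le_rfl
  have hax : ∀ i ≤ n, a ≤ x i := by
    intro i hi; rw [← hx0]; exact hmono' i hi 0 (Nat.zero_le i)
  have hxb : ∀ i ≤ n, x i ≤ b := by
    intro i hi; rw [← hxn]; exact hmono' n le_rfl i hi
  have hfi : ∀ i < n, IntervalIntegrable f MeasureTheory.volume (x i) (x (i + 1)) := by
    intro i hi
    apply ContinuousOn.intervalIntegrable
    rw [Set.uIcc_of_le (hmono i hi).le]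
    exact hf.mono (Set.Icc_subset_Icc (hax i hi.le) (hxb (i + 1) hi))
  have hsum : ∑ i ∈ Finset.range n, (∫ t in x i..x (i + 1), f t) = ∫ t in a..b, f t := by
    rw [← hx0, ← hxn]
    exact intervalIntegral.sum_integral_adjacent_intervals hfi
  have hξ0 : ∀ i < n, 0 < ξ i := fun i hi =>
    lt_of_lt_of_le ha (le_trans (hax i hi.le) (hξ i hi).1)
  refine ⟨?_, ?_, ?_⟩
  · -- first inequality
    rw [← hsum, ← Finset.sum_sub_distrib, Finset.mul_sum]
    calc |∑ i ∈ Finset.range n, ((∫ t in x i..x (i + 1), f t) -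
            f (ξ i) / ξ i * ((x i + x (i + 1)) / 2) * (x (i + 1) - x i))|
        ≤ ∑ i ∈ Finset.range n, |(∫ t in x i..x (i + 1), f t) -
            f (ξ i) / ξ i * ((x i + x (i + 1)) / 2) * (x (i + 1) - x i)| :=
          Finset.abs_sum_le_sum_abs _ _
      _ ≤ ∑ i ∈ Finset.range n, M * ((x (i + 1) - x i) ^ 2 / ξ i *
            (1 / 4 + ((ξ i - (x i + x (i + 1)) / 2) / (x (i + 1) - x i)) ^ 2)) := by
          apply Finset.sum_le_sum
          intro i hi
          rw [Finset.mem_range] at hi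
          exact interval_est a b f ha hab hf hd hbdd (x i) (x (i + 1)) (ξ i)
            (hmono i hi) (hax i hi.le) (hxb (i + 1) hi) (hξ i hi)
  · -- second inequality
    rw [Finset.mul_sum, Finset.mul_sum]
    apply Finset.sum_le_sum
    intro i hi
    rw [Finset.mem_range] at hi
    have hh : 0 < x (i + 1) - x i := by linarith [hmono i hi]
    have hδ : ((ξ i - (x i + x (i + 1)) / 2) / (x (i + 1) - x i)) ^ 2 ≤ 1 / 4 := by
      rw [div_pow, div_le_iff₀ (by positivity)]
      nlinarith [(hξ i hi).1, (hξ i hi).2]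
    have h1 : (0:ℝ) ≤ (x (i + 1) - x i) ^ 2 / ξ i := div_nonneg (by positivity) (hξ0 i hi).le
    calc M * ((x (i + 1) - x i) ^ 2 / ξ i *
          (1 / 4 + ((ξ i - (x i + x (i + 1)) / 2) / (x (i + 1) - x i)) ^ 2))
        ≤ M * ((x (i + 1) - x i) ^ 2 / ξ i * (1 / 2)) := by
          apply mul_le_mul_of_nonneg_left _ hM0
          apply mul_le_mul_of_nonneg_left _ h1
          linarith
      _ = 1 / 2 * M * ((x (i + 1) - x i) ^ 2 / ξ i) := by ring
  · -- third inequality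
    rw [Finset.mul_sum, Finset.mul_sum]
    apply Finset.sum_le_sum
    intro i hi
    rw [Finset.mem_range] at hi
    have hdiv : (x (i + 1) - x i) ^ 2 / ξ i ≤ (x (i + 1) - x i) ^ 2 / a :=
      div_le_div_of_nonneg_left (by positivity) ha (le_trans (hax i hi.le) (hξ i hi).1)
    calc 1 / 2 * M * ((x (i + 1) - x i) ^ 2 / ξ i)
        ≤ 1 / 2 * M * ((x (i + 1) - x i) ^ 2 / a) := by
          apply mul_le_mul_of_nonneg_left hdiv (by linarith)
      _ = M / (2 * a) * (x (i + 1) - x i) ^ 2 := by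
          field_simp
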